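/- Let L > 0, N ≥ 0, γ > L, Δ > 0 and set T̃ = √(2N/L). Let k₁ = ⌈T̃/Δ⌉ and k₂ = ⌈T̂/Δ⌉ where T̂ = 2√(2N/L) + R₁/(γ−L) + 3Δ(γ − L/2)/(γ−L). Suppose a sequence (V_k) of nonnegative reals satisfies V_{k₁} ≤ R₁ + k₁Δ(γ+L) and, for every k with k₁ < k ≤ k₂ such that V_k > 2√(2NL) + LΔ/2, the decrease V_k ≤ V_{k−1} − Δ(γ−L) holds. Then V_{k₂} ≤ 2√(2NL) + LΔ/2. -/

import Mathlib

/-- Discrete backward-integration argument in the proof of Theorem 2 (case `k₀ = 0`):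
a nonnegative sequence `V` bounded at `k₁ = ⌈T̃/Δ⌉` and decreasing by `Δ(γ−L)` at
every step where it exceeds the accuracy band satisfies
`V_{k₂} ≤ 2√(2NL) + LΔ/2` with `k₂ = ⌈T̂/Δ⌉`. -/
theorem discrete_convergence_time
    (L N γ Δ R₁ : ℝ) (hL : 0 < L) (hN : 0 ≤ N) (hγ : L < γ) (hΔ : 0 < Δ)
    (hR₁ : 0 ≤ R₁)
    (V : ℕ → ℝ) (hVnn : ∀ k, 0 ≤ V k)
    (k₁ k₂ : ℕ)
    (hk₁ : k₁ = ⌈Real.sqrt (2 * N / L) / Δ⌉₊)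
    (hk₂ : k₂ = ⌈(2 * Real.sqrt (2 * N / L) + R₁ / (γ - L)
        + 3 * Δ * (γ - L / 2) / (γ - L)) / Δ⌉₊)
    (hV1 : V k₁ ≤ R₁ + k₁ * Δ * (γ + L))
    (hdec : ∀ k, k₁ < k → k ≤ k₂ →
      2 * Real.sqrt (2 * N * L) + L * Δ / 2 < V k →
      V k ≤ V (k - 1) - Δ * (γ - L)) :
    V k₂ ≤ 2 * Real.sqrt (2 * N * L) + L * Δ / 2 := by
  by_contra hcon
  push_neg at hcon
  have hγL : (0:ℝ) < γ - L := by linarith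
  set s := Real.sqrt (2 * N / L) with hs
  set t := Real.sqrt (2 * N * L) with ht
  have hsnn : 0 ≤ s := Real.sqrt_nonneg _
  have htnn : 0 ≤ t := Real.sqrt_nonneg _
  have hst : t = L * s := by
    rw [ht, hs, show (2*N*L) = L^2 * (2*N/L) by field_simp,
      Real.sqrt_mul (sq_nonneg L), Real.sqrt_sq hL.le]
  -- k₁ ≤ k₂
  have hk12 : k₁ ≤ k₂ := by
    rw [hk₁, hk₂]
    apply Nat.ceil_le_ceil
    have h1 : 0 ≤ R₁ / (γ - L) := div_nonneg hR₁ hγL.le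
    have h2 : 0 ≤ 3 * Δ * (γ - L / 2) / (γ - L) := by
      apply div_nonneg _ hγL.le
      nlinarith
    have : s ≤ 2 * s + R₁ / (γ - L) + 3 * Δ * (γ - L / 2) / (γ - L) := by linarith
    exact div_le_div_of_nonneg_right this hΔ.le
  -- backward chain
  have key : ∀ j, j ≤ k₂ - k₁ → V k₂ ≤ V (k₂ - j) - j * (Δ * (γ - L)) := by
    intro j
    induction j with
    | zero => intro _; simp
    | succ n ih =>
      intro hj
      have IH := ih (by omega)
      have hnn : 0 ≤ (n:ℝ) * (Δ * (γ - L)) :=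
        mul_nonneg (Nat.cast_nonneg n) (mul_nonneg hΔ.le hγL.le)
      have hband : 2 * t + L * Δ / 2 < V (k₂ - n) := by linarith
      have hlt : k₁ < k₂ - n := by omega
      have hd := hdec (k₂ - n) hlt (by omega) hband
      have hsub : k₂ - n - 1 = k₂ - (n + 1) := by omega
      rw [hsub] at hd
      have : ((n:ℝ) + 1) * (Δ * (γ - L)) = n * (Δ * (γ - L)) + Δ * (γ - L) := by ring
      push_cast
      linarith
  have hfin := key (k₂ - k₁) le_rfl
  rw [Nat.sub_sub_self hk12] at hfin
  have hcast : ((k₂ - k₁ : ℕ) : ℝ) = (k₂:ℝ) - (k₁:ℝ) := by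
    exact Nat.cast_sub hk12
  rw [hcast] at hfin
  -- bounds on k₁, k₂
  have hk1Δ : (k₁:ℝ) * Δ < s + Δ := by
    have h1 : (k₁:ℝ) < s / Δ + 1 := by
      rw [hk₁]
      exact Nat.ceil_lt_add_one (div_nonneg hsnn hΔ.le)
    have := (mul_lt_mul_of_pos_right h1 hΔ)
    calc (k₁:ℝ) * Δ < (s / Δ + 1) * Δ := this
      _ = s + Δ := by field_simp
  have hk2Δ : 2 * s + R₁ / (γ - L) + 3 * Δ * (γ - L / 2) / (γ - L) ≤ (k₂:ℝ) * Δ := by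
    have h1 : (2 * s + R₁ / (γ - L) + 3 * Δ * (γ - L / 2) / (γ - L)) / Δ ≤ (k₂:ℝ) := by
      rw [hk₂]; exact Nat.le_ceil _
    calc 2 * s + R₁ / (γ - L) + 3 * Δ * (γ - L / 2) / (γ - L)
        = (2 * s + R₁ / (γ - L) + 3 * Δ * (γ - L / 2) / (γ - L)) / Δ * Δ := by field_simp
      _ ≤ (k₂:ℝ) * Δ := mul_le_mul_of_nonneg_right h1 hΔ.le
  have hk2Δ' : 2 * s * (γ - L) + R₁ + 3 * Δ * (γ - L / 2) ≤ (k₂:ℝ) * Δ * (γ - L) := by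
    have := mul_le_mul_of_nonneg_right hk2Δ hγL.le
    have heq : (2 * s + R₁ / (γ - L) + 3 * Δ * (γ - L / 2) / (γ - L)) * (γ - L)
        = 2 * s * (γ - L) + R₁ + 3 * Δ * (γ - L / 2) := by field_simp
    linarith [heq ▸ this]
  -- final contradiction
  have hγ0 : (0:ℝ) < γ := lt_trans hL hγ
  nlinarith [hfin, hV1, hcon, hk1Δ, hk2Δ',
    mul_le_mul_of_nonneg_left hk1Δ.le (by linarith : (0:ℝ) ≤ 2 * γ)]
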